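/- Let Y be a metric space, r₀ > 0, and let H be a group acting by isometries on Y such that every nontrivial h ∈ H has translation length ℓ(h) = inf_y d(hy,y) ≥ l, where l ≥ 2π sinh r₀. Define the cone distance on pairs (y,r), (y',r') ∈ Y × [0,r₀] by cosh d((y,r),(y',r')) = cosh r cosh r' − sinh r sinh r' cos(min{π, d(y,y')/sinh r₀}), and the quotient distance d(x̄, x̄') = inf_{h∈H} d(x, hx'). If x = (y,r) and x' = (y',r') satisfy d_Y(y,y') ≤ l − π sinh r₀, then d(x̄, x̄') = d(x, x'). -/
import Mathlib


open Real

/-- Local isometries in the quotient of a cone: if every nontrivial element of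
`H` translates points of `Y` by at least `l ≥ 2π sinh r₀`, and two points of
the cone have base points at distance at most `l − π sinh r₀`, then their
distance in the quotient cone equals their distance in the cone. -/
theorem cone_quotient_local_isometry
    {Y : Type*} [MetricSpace Y] (H : Type*) [Group H] [MulAction H Y]
    (hisom : ∀ (h : H) (y y' : Y), dist (h • y) (h • y') = dist y y')
    (r₀ : ℝ) (hr₀ : 0 < r₀) (l : ℝ) (hl : 2 * π * Real.sinh r₀ ≤ l)
    (htl : ∀ h : H, h ≠ 1 → ∀ y : Y, l ≤ dist (h • y) y)
    -- the cone distance, characterized by the cosh formula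
    (D : Y × ℝ → Y × ℝ → ℝ)
    (hD_nonneg : ∀ p q, 0 ≤ D p q)
    (hD : ∀ p q : Y × ℝ,
      Real.cosh (D p q) =
        Real.cosh p.2 * Real.cosh q.2 -
          Real.sinh p.2 * Real.sinh q.2 *
            Real.cos (min π (dist p.1 q.1 / Real.sinh r₀)))
    -- the quotient distance is computed by the same formula with the
    -- quotient distance on Y (used without proof in the paper)
    (hquot : ∀ p q : Y × ℝ,
      Real.cosh (⨅ h : H, D p (h • q.1, q.2)) =
        Real.cosh p.2 * Real.cosh q.2 -
          Real.sinh p.2 * Real.sinh q.2 *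
            Real.cos (min π ((⨅ h : H, dist p.1 (h • q.1)) / Real.sinh r₀))) :
    ∀ (y y' : Y) (r r' : ℝ), r ∈ Set.Icc 0 r₀ → r' ∈ Set.Icc 0 r₀ →
      dist y y' ≤ l - π * Real.sinh r₀ →
      (⨅ h : H, D (y, r) (h • y', r')) = D (y, r) (y', r') := by
  intro y y' r r' hr hr' hdist
  have hs : 0 < Real.sinh r₀ := Real.sinh_pos_iff.2 hr₀
  have hπs : 0 < π * Real.sinh r₀ := mul_pos Real.pi_pos hs
  -- every h ≠ 1 moves y' far from y
  have hfar : ∀ h : H, h ≠ 1 → π * Real.sinh r₀ ≤ dist y (h • y') := by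
    intro h hne
    have h1 : l ≤ dist (h • y') y' := htl h hne y'
    have h2 : dist (h • y') y' ≤ dist (h • y') y + dist y y' := dist_triangle _ _ _
    have : l - dist y y' ≤ dist (h • y') y := by linarith
    rw [dist_comm]
    linarith
  -- the infimum of base distances
  have hbdd : BddBelow (Set.range fun h : H => dist y (h • y')) :=
    ⟨0, by rintro _ ⟨h, rfl⟩; exact dist_nonneg⟩
  have hinf_le : (⨅ h : H, dist y (h • y')) ≤ dist y y' := by
    have := ciInf_le hbdd (1 : H)
    simpa using this
  have hcos_eq :
      Real.cos (min π ((⨅ h : H, dist y (h • y')) / Real.sinh r₀)) =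
        Real.cos (min π (dist y y' / Real.sinh r₀)) := by
    rcases lt_or_ge (dist y y') (π * Real.sinh r₀) with hc | hc
    · -- infimum equals dist y y'
      have hinf_ge : dist y y' ≤ ⨅ h : H, dist y (h • y') := by
        apply le_ciInf
        intro h
        by_cases hne : h = 1
        · simp [hne]
        · exact le_trans (le_of_lt hc) (hfar h hne)
      rw [le_antisymm hinf_le hinf_ge]
    · -- both mins are π
      have h1 : min π (dist y y' / Real.sinh r₀) = π :=
        min_eq_left ((le_div_iff₀ hs).2 (by linarith))
      have hinf_ge : π * Real.sinh r₀ ≤ ⨅ h : H, dist y (h • y') := by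
        apply le_ciInf
        intro h
        by_cases hne : h = 1
        · simpa [hne] using hc
        · exact hfar h hne
      have h2 : min π ((⨅ h : H, dist y (h • y')) / Real.sinh r₀) = π :=
        min_eq_left ((le_div_iff₀ hs).2 (by linarith))
      rw [h1, h2]
  have hcosh_eq :
      Real.cosh (⨅ h : H, D (y, r) (h • y', r')) = Real.cosh (D (y, r) (y', r')) := by
    have := hquot (y, r) (y', r')
    rw [this, hD (y, r) (y', r')]
    simp only at hcos_eq ⊢
    rw [hcos_eq]
  have hinfD_nonneg : 0 ≤ ⨅ h : H, D (y, r) (h • y', r') :=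
    Real.iInf_nonneg fun h => hD_nonneg _ _
  have hD_nonneg' : 0 ≤ D (y, r) (y', r') := hD_nonneg _ _
  exact Real.cosh_strictMonoOn.injOn hinfD_nonneg hD_nonneg' hcosh_eq
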